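/- Let P be an n×l binary matrix, θ a real angle, and s ∈ F₂ˡ. Then the correlation coefficient of the IQP distribution satisfies β_s = α_{(P_s, 2θ)} = 2^{−r_s} · Σ_{c∈C(P_s)} exp( 2iθ·(n_s − 2|c|) ), where P_s is the affinification of P by s, n_s its number of rows and r_s the rank of C(P_s). -/

import Mathlib

open Matrix BigOperators Finset

noncomputable section

/-- The binary code generated by the columns of `P`: all vectors `P·s`. -/
def code {m : Type*} [Fintype m] {l : ℕ} (P : Matrix m (Fin l) (ZMod 2)) :
    Finset (m → ZMod 2) :=
  Finset.image P.mulVec Finset.univ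

/-- Rank function of the binary matroid of `P`: the F₂-rank of the submatrix of
rows indexed by `X`. -/
def rho {m : Type*} [Fintype m] {l : ℕ} (P : Matrix m (Fin l) (ZMod 2)) (X : Finset m) : ℕ :=
  (P.submatrix (fun i : {i // i ∈ X} => (i : m)) id).rank

/-- Tutte polynomial of the binary matroid of `P`. -/
def tutte {m : Type*} [Fintype m] {l : ℕ} (P : Matrix m (Fin l) (ZMod 2)) (x y : ℂ) : ℂ :=
  ∑ X ∈ (Finset.univ : Finset m).powerset,
    (x - 1) ^ (rho P Finset.univ - rho P X) * (y - 1) ^ (X.card - rho P X)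

/-- Normalised weight enumerator. -/
def alpha {m : Type*} [Fintype m] {l : ℕ} (P : Matrix m (Fin l) (ZMod 2)) (θ : ℝ) : ℂ :=
  (2 : ℂ) ^ (-(P.rank : ℤ)) *
    ∑ c ∈ code P, Complex.exp (Complex.I * θ * ((Fintype.card m : ℂ) - 2 * (hammingNorm c : ℂ)))

/-- The IQP probability distribution of an X-program `(P, θ)`. -/
def iqpProb {n l : ℕ} (P : Matrix (Fin n) (Fin l) (ZMod 2)) (θ : ℝ) (x : Fin l → ZMod 2) : ℝ :=
  ‖(2 : ℂ) ^ (-(l : ℤ)) *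
    ∑ a : Fin l → ZMod 2, (-1 : ℂ) ^ (x ⬝ᵥ a).val *
      Complex.exp (Complex.I * θ * ∑ j, (-1 : ℂ) ^ ((P j) ⬝ᵥ a).val)‖ ^ 2

/-- Affinification: the submatrix of rows `P_j` with `P_j ⬝ s = 1`. -/
def affin {n l : ℕ} (P : Matrix (Fin n) (Fin l) (ZMod 2)) (s : Fin l → ZMod 2) :
    Matrix {j : Fin n // (P j) ⬝ᵥ s = 1} (Fin l) (ZMod 2) :=
  Matrix.of fun j k => P j.1 k


/- ## Auxiliary lemmas -/

private lemma chi_add' (u w : ZMod 2) : ((-1:ℂ))^((u+w).val) = (-1)^u.val * (-1)^w.val := by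
  rcases (show ∀ v : ZMod 2, v = 0 ∨ v = 1 by decide) u with rfl | rfl <;>
    rcases (show ∀ v : ZMod 2, v = 0 ∨ v = 1 by decide) w with rfl | rfl <;>
    norm_num [show ZMod.val (0:ZMod 2) = 0 from rfl, show ZMod.val (1:ZMod 2) = 1 from rfl,
      show ZMod.val (2:ZMod 2) = 0 from rfl]

private lemma key_diff' (w u : ZMod 2) :
    ((-1:ℂ))^u.val - (-1)^((w+u).val) = if w = 1 then 2*(-1:ℂ)^u.val else 0 := by
  rcases (show ∀ v : ZMod 2, v = 0 ∨ v = 1 by decide) w with rfl | rfl <;>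
    rcases (show ∀ v : ZMod 2, v = 0 ∨ v = 1 by decide) u with rfl | rfl <;>
    norm_num [show ZMod.val (0:ZMod 2) = 0 from rfl, show ZMod.val (1:ZMod 2) = 1 from rfl,
      show ZMod.val (2:ZMod 2) = 0 from rfl]

private lemma vadd_self' {l : ℕ} (v : Fin l → ZMod 2) : v + v = 0 := by
  funext i
  exact CharTwo.add_self_eq_zero (v i)

private lemma sum_char' {l : ℕ} (v : Fin l → ZMod 2) :
    ∑ x : Fin l → ZMod 2, ((-1:ℂ))^((x ⬝ᵥ v).val) = if v = 0 then 2^l else 0 := by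
  split_ifs with h
  · subst h
    simp [dotProduct_zero, show ZMod.val (0:ZMod 2) = 0 from rfl]
  · obtain ⟨k, hk⟩ : ∃ k, v k ≠ 0 := by
      by_contra hc
      push_neg at hc
      exact h (funext hc)
    have hk1 : v k = 1 := by
      have : ∀ u : ZMod 2, u ≠ 0 → u = 1 := by decide
      exact this _ hk
    have he : ∑ x : Fin l → ZMod 2, ((-1:ℂ))^((x ⬝ᵥ v).val)
        = ∑ x : Fin l → ZMod 2, ((-1:ℂ))^(((x + Pi.single k 1) ⬝ᵥ v).val) :=
      (Fintype.sum_equiv (Equiv.addRight (Pi.single k 1)) _ _ (fun x => rfl)).symm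
    have hneg : ∀ x : Fin l → ZMod 2,
        ((-1:ℂ))^(((x + Pi.single k 1) ⬝ᵥ v).val) = -((-1:ℂ))^((x ⬝ᵥ v).val) := by
      intro x
      rw [add_dotProduct, chi_add', single_dotProduct, one_mul, hk1]
      norm_num [show ZMod.val (1:ZMod 2) = 1 from rfl]
    rw [Finset.sum_congr rfl (fun x _ => hneg x)] at he
    have h2 : (∑ x : Fin l → ZMod 2, ((-1:ℂ))^((x ⬝ᵥ v).val))
        + ∑ x : Fin l → ZMod 2, ((-1:ℂ))^((x ⬝ᵥ v).val) = 0 := by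
      nth_rewrite 1 [he]
      simp
    exact add_self_eq_zero.mp h2

private lemma sum_chi_eq_card_sub' {m : Type*} [Fintype m] (v : m → ZMod 2) :
    (∑ j, ((-1:ℂ))^((v j).val)) = (Fintype.card m : ℂ) - 2 * (hammingNorm v : ℂ) := by
  have h : ∀ j, ((-1:ℂ))^((v j).val) = 1 - 2 * (if v j ≠ 0 then 1 else 0) := by
    intro j
    have : ∀ u : ZMod 2, ((-1:ℂ))^(u.val) = 1 - 2 * (if u ≠ 0 then 1 else 0) := by
      intro u
      rcases (show ∀ v : ZMod 2, v = 0 ∨ v = 1 by decide) u with rfl | rfl <;>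
        norm_num [show ZMod.val (0:ZMod 2) = 0 from rfl, show ZMod.val (1:ZMod 2) = 1 from rfl]
    exact this _
  rw [Finset.sum_congr rfl (fun j _ => h j)]
  rw [Finset.sum_sub_distrib, ← Finset.mul_sum, Finset.sum_boole]
  simp [hammingNorm, Finset.card_univ]

private lemma fiber_card' {m : Type*} [Fintype m] {l : ℕ}
    (Q : Matrix m (Fin l) (ZMod 2)) (c : m → ZMod 2) (hc : c ∈ code Q) :
    (Finset.univ.filter fun a : Fin l → ZMod 2 => Q.mulVec a = c).card = 2 ^ (l - Q.rank) := by
  classical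
  haveI : Fintype (LinearMap.ker Q.mulVecLin) := Fintype.ofFinite _
  obtain ⟨a₀, -, ha₀⟩ := Finset.mem_image.mp hc
  have hbij : (Finset.univ.filter fun a : Fin l → ZMod 2 => Q.mulVec a = c).card
      = (Finset.univ.filter fun a : Fin l → ZMod 2 => Q.mulVec a = 0).card := by
    apply Finset.card_bij (fun a _ => a - a₀)
    · intro a ha
      simp only [Finset.mem_filter, Finset.mem_univ, true_and] at ha ⊢
      rw [Matrix.mulVec_sub, ha, ha₀, sub_self]
    · intro a ha b hb hab
      exact sub_left_injective hab
    · intro b hb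
      simp only [Finset.mem_filter, Finset.mem_univ, true_and] at hb ⊢
      exact ⟨b + a₀, by rw [Matrix.mulVec_add, hb, ha₀, zero_add], by abel⟩
  rw [hbij]
  have hker : (Finset.univ.filter fun a : Fin l → ZMod 2 => Q.mulVec a = 0).card
      = Fintype.card (LinearMap.ker Q.mulVecLin) := by
    rw [← Fintype.card_subtype]
    exact (Fintype.card_congr (Equiv.subtypeEquivRight
      (fun a => by simp [LinearMap.mem_ker, Matrix.mulVecLin_apply]))).symm
  rw [hker]
  have hcard : Fintype.card (LinearMap.ker Q.mulVecLin)
      = 2 ^ Module.finrank (ZMod 2) (LinearMap.ker Q.mulVecLin) := by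
    have := Module.card_eq_pow_finrank (K := ZMod 2) (V := LinearMap.ker Q.mulVecLin)
    simpa [ZMod.card] using this
  rw [hcard]
  congr 1
  have hrn := LinearMap.finrank_range_add_finrank_ker Q.mulVecLin
  have hdom : Module.finrank (ZMod 2) (Fin l → ZMod 2) = l := by simp
  rw [hdom] at hrn
  have : Q.rank = Module.finrank (ZMod 2) (LinearMap.range Q.mulVecLin) := rfl
  omega


/-- the correlation coefficient satisfies `β_s = α_{(P_s, 2θ)}`. -/
theorem beta_eq_alpha_affin {n l : ℕ} (P : Matrix (Fin n) (Fin l) (ZMod 2)) (θ : ℝ)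
    (s : Fin l → ZMod 2) :
    ((∑ x : Fin l → ZMod 2, (-1 : ℝ) ^ (x ⬝ᵥ s).val * iqpProb P θ x : ℝ) : ℂ) =
      alpha (affin P s) (2 * θ) := by
  classical
  set Q : Matrix {j : Fin n // (P j) ⬝ᵥ s = 1} (Fin l) (ZMod 2) := affin P s with hQdef
  set F : (Fin l → ZMod 2) → ℂ :=
    fun a => Complex.exp (Complex.I * θ * ∑ j, (-1:ℂ)^((P j ⬝ᵥ a).val)) with hF
  set c₀ : ℂ := (2:ℂ)^(-(l:ℤ)) with hc₀
  -- conjugation facts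
  have hc₀conj : (starRingEnd ℂ) c₀ = c₀ := by
    rw [hc₀, map_zpow₀]
    congr 1
    rw [Complex.conj_ofNat]
  have hchi_conj : ∀ k : ℕ, (starRingEnd ℂ) ((-1:ℂ)^k) = (-1)^k := by
    intro k
    rw [map_pow]
    norm_num
  have hFconj : ∀ b, (starRingEnd ℂ) (F b)
      = Complex.exp (-(Complex.I * θ) * ∑ j, (-1:ℂ)^((P j ⬝ᵥ b).val)) := by
    intro b
    rw [hF, ← Complex.exp_conj]
    congr 1
    rw [_root_.map_mul, _root_.map_mul, map_sum]
    simp only [hchi_conj, Complex.conj_I, Complex.conj_ofReal]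
    ring
  -- Step 1: rewrite the LHS as a triple sum
  have hiqp : ∀ x : Fin l → ZMod 2, ((iqpProb P θ x : ℝ) : ℂ)
      = (c₀ * ∑ a : Fin l → ZMod 2, (-1:ℂ)^((x ⬝ᵥ a).val) * F a)
        * (starRingEnd ℂ) (c₀ * ∑ a : Fin l → ZMod 2, (-1:ℂ)^((x ⬝ᵥ a).val) * F a) := by
    intro x
    rw [iqpProb, Complex.sq_norm, ← Complex.mul_conj]
  have hFexp : ∀ a : Fin l → ZMod 2,
      F a = Complex.exp (Complex.I * θ * ∑ j, (-1:ℂ)^((P j ⬝ᵥ a).val)) := fun a => rfl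
  have hconj_inner : ∀ x : Fin l → ZMod 2,
      (starRingEnd ℂ) (c₀ * ∑ a : Fin l → ZMod 2, (-1:ℂ)^((x ⬝ᵥ a).val) * F a)
      = c₀ * ∑ b : Fin l → ZMod 2, (-1:ℂ)^((x ⬝ᵥ b).val) * (starRingEnd ℂ) (F b) := by
    intro x
    rw [_root_.map_mul, map_sum, hc₀conj]
    congr 1
    refine Finset.sum_congr rfl fun b _ => ?_
    rw [_root_.map_mul, hchi_conj]
  -- the key pointwise computation
  have hFF : ∀ a : Fin l → ZMod 2, F a * (starRingEnd ℂ) (F (s + a))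
      = Complex.exp (Complex.I * ((2*θ : ℝ) : ℂ)
          * ((Fintype.card {j : Fin n // P j ⬝ᵥ s = 1} : ℂ)
              - 2 * (hammingNorm (Q.mulVec a) : ℂ))) := by
    intro a
    rw [hFconj (s + a), hFexp a, ← Complex.exp_add]
    congr 1
    have hsum : (∑ j, ((-1:ℂ))^((P j ⬝ᵥ a).val)) - (∑ j, ((-1:ℂ))^((P j ⬝ᵥ (s+a)).val))
        = 2 * ∑ j : {j : Fin n // P j ⬝ᵥ s = 1}, ((-1:ℂ))^((P j.1 ⬝ᵥ a).val) := by
      rw [← Finset.sum_sub_distrib]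
      have hterm : ∀ j : Fin n, ((-1:ℂ))^((P j ⬝ᵥ a).val) - ((-1:ℂ))^((P j ⬝ᵥ (s+a)).val)
          = if P j ⬝ᵥ s = 1 then 2*((-1:ℂ))^((P j ⬝ᵥ a).val) else 0 := by
        intro j
        rw [dotProduct_add]
        exact key_diff' _ _
      rw [Finset.sum_congr rfl fun j _ => hterm j, ← Finset.sum_filter]
      rw [Finset.sum_subtype (p := fun j => P j ⬝ᵥ s = 1) _ (fun j => by simp)
        (fun j => 2*((-1:ℂ))^((P j ⬝ᵥ a).val))]
      rw [Finset.mul_sum]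
    have hchi := sum_chi_eq_card_sub' (Q.mulVec a)
    have hQm : ∀ j : {j : Fin n // P j ⬝ᵥ s = 1}, (Q.mulVec a) j = P j.1 ⬝ᵥ a := fun j => rfl
    rw [Finset.sum_congr rfl (fun j _ => by rw [hQm j])] at hchi
    have hrg : Complex.I * (θ:ℂ) * (∑ j, ((-1:ℂ))^((P j ⬝ᵥ a).val))
        + (-(Complex.I * θ)) * (∑ j, ((-1:ℂ))^((P j ⬝ᵥ (s+a)).val))
        = Complex.I * θ * ((∑ j, ((-1:ℂ))^((P j ⬝ᵥ a).val))
            - ∑ j, ((-1:ℂ))^((P j ⬝ᵥ (s+a)).val)) := by ring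
    rw [hrg, hsum, hchi]
    push_cast
    ring
  have hcond : ∀ a b : Fin l → ZMod 2, s + (a + b) = 0 ↔ b = s + a := by
    intro a b
    constructor
    · intro h
      rw [← add_assoc] at h
      have h2 : (s + a) + ((s + a) + b) = (s + a) + 0 := by rw [h]
      rwa [← add_assoc, vadd_self', zero_add, add_zero] at h2
    · intro h
      subst h
      rw [show s + (a + (s + a)) = (s + a) + (s + a) by abel, vadd_self']
  have hr : Q.rank ≤ l := Q.rank_le_card_width.trans (by simp)
  calc ((∑ x : Fin l → ZMod 2, (-1 : ℝ) ^ (x ⬝ᵥ s).val * iqpProb P θ x : ℝ) : ℂ)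
      = ∑ x : Fin l → ZMod 2, (-1:ℂ)^((x ⬝ᵥ s).val) * ((iqpProb P θ x : ℝ) : ℂ) := by
        push_cast
        rfl
    _ = ∑ x : Fin l → ZMod 2, c₀ * c₀ * ∑ a : Fin l → ZMod 2, ∑ b : Fin l → ZMod 2,
          (F a * (starRingEnd ℂ) (F b)) * (-1:ℂ)^((x ⬝ᵥ (s + (a + b))).val) := by
        refine Finset.sum_congr rfl fun x _ => ?_
        rw [hiqp x, hconj_inner x]
        rw [show (-1:ℂ)^((x ⬝ᵥ s).val)
            * ((c₀ * ∑ a : Fin l → ZMod 2, (-1:ℂ)^((x ⬝ᵥ a).val) * F a)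
              * (c₀ * ∑ b : Fin l → ZMod 2, (-1:ℂ)^((x ⬝ᵥ b).val) * (starRingEnd ℂ) (F b)))
            = c₀ * c₀ * ((-1:ℂ)^((x ⬝ᵥ s).val)
              * ((∑ a : Fin l → ZMod 2, (-1:ℂ)^((x ⬝ᵥ a).val) * F a)
                * (∑ b : Fin l → ZMod 2, (-1:ℂ)^((x ⬝ᵥ b).val) * (starRingEnd ℂ) (F b))))
          from by ring]
        congr 1
        rw [Finset.sum_mul_sum]
        rw [Finset.mul_sum]
        refine Finset.sum_congr rfl fun a _ => ?_
        rw [Finset.mul_sum]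
        refine Finset.sum_congr rfl fun b _ => ?_
        rw [dotProduct_add, dotProduct_add, chi_add', chi_add']
        ring
    _ = c₀ * c₀ * ∑ a : Fin l → ZMod 2, ∑ b : Fin l → ZMod 2,
          (F a * (starRingEnd ℂ) (F b))
            * ∑ x : Fin l → ZMod 2, (-1:ℂ)^((x ⬝ᵥ (s + (a + b))).val) := by
        rw [← Finset.mul_sum]
        congr 1
        rw [Finset.sum_comm]
        refine Finset.sum_congr rfl fun a _ => ?_
        rw [Finset.sum_comm]
        refine Finset.sum_congr rfl fun b _ => ?_
        rw [← Finset.mul_sum]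
    _ = c₀ * c₀ * ∑ a : Fin l → ZMod 2, ∑ b : Fin l → ZMod 2,
          (if b = s + a then (F a * (starRingEnd ℂ) (F b)) * (2:ℂ)^l else 0) := by
        congr 1
        refine Finset.sum_congr rfl fun a _ => Finset.sum_congr rfl fun b _ => ?_
        rw [sum_char']
        by_cases hb : b = s + a
        · rw [if_pos ((hcond a b).mpr hb), if_pos hb]
        · rw [if_neg (fun h => hb ((hcond a b).mp h)), if_neg hb, mul_zero]
    _ = c₀ * c₀ * ∑ a : Fin l → ZMod 2, (F a * (starRingEnd ℂ) (F (s + a))) * (2:ℂ)^l := by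
        congr 1
        refine Finset.sum_congr rfl fun a _ => ?_
        rw [Finset.sum_ite_eq' Finset.univ (s + a)
          (fun b => (F a * (starRingEnd ℂ) (F b)) * (2:ℂ)^l), if_pos (Finset.mem_univ _)]
    _ = c₀ * ∑ a : Fin l → ZMod 2, F a * (starRingEnd ℂ) (F (s + a)) := by
        rw [← Finset.sum_mul]
        rw [show c₀ * c₀ * ((∑ a : Fin l → ZMod 2, F a * (starRingEnd ℂ) (F (s + a))) * (2:ℂ)^l)
            = (c₀ * c₀ * (2:ℂ)^l) * ∑ a : Fin l → ZMod 2, F a * (starRingEnd ℂ) (F (s + a))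
          from by ring]
        congr 1
        rw [hc₀, ← zpow_natCast (2:ℂ) l, ← zpow_add₀ (two_ne_zero), ← zpow_add₀ (two_ne_zero)]
        congr 1
        ring
    _ = c₀ * ∑ a : Fin l → ZMod 2,
          Complex.exp (Complex.I * ((2*θ : ℝ) : ℂ)
            * ((Fintype.card {j : Fin n // P j ⬝ᵥ s = 1} : ℂ)
                - 2 * (hammingNorm (Q.mulVec a) : ℂ))) := by
        congr 1
        exact Finset.sum_congr rfl fun a _ => hFF a
    _ = c₀ * ∑ c ∈ code Q, ((2:ℂ)^(l - Q.rank))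
          * Complex.exp (Complex.I * ((2*θ : ℝ) : ℂ)
            * ((Fintype.card {j : Fin n // P j ⬝ᵥ s = 1} : ℂ) - 2 * (hammingNorm c : ℂ))) := by
        congr 1
        rw [← Finset.sum_fiberwise_of_maps_to'
          (g := Q.mulVec) (t := code Q)
          (fun a _ => Finset.mem_image_of_mem _ (Finset.mem_univ a))
          (fun c => Complex.exp (Complex.I * ((2*θ : ℝ) : ℂ)
            * ((Fintype.card {j : Fin n // P j ⬝ᵥ s = 1} : ℂ) - 2 * (hammingNorm c : ℂ))))]
        refine Finset.sum_congr rfl fun c hc => ?_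
        rw [Finset.sum_const, fiber_card' Q c hc, nsmul_eq_mul]
        push_cast
        ring
    _ = alpha (affin P s) (2 * θ) := by
        rw [alpha, ← Finset.mul_sum, ← mul_assoc]
        congr 1
        rw [hc₀, ← zpow_natCast (2:ℂ) (l - Q.rank), ← zpow_add₀ (two_ne_zero)]
        congr 1
        have : ((l - Q.rank : ℕ) : ℤ) = (l:ℤ) - Q.rank := by
          rw [Nat.cast_sub hr]
        rw [this]
        have : (affin P s).rank = Q.rank := rfl
        rw [this]
        ring

end
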